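/- Let U be an ℓ×ℓ complex unitary matrix with spectral decomposition U = Σ_{r=1}^m λ_r F_r, and let M̂ = Σ_r F_r ∘ conj(F_r) be its average mixing matrix. Then M̂ has real nonnegative entries, M̂ is symmetric, and M̂ is doubly stochastic: every row sum and every column sum of M̂ equals 1. -/

import Mathlib

open Matrix Finset

/-- The average mixing matrix `M̂ = ∑ r, F_r ∘ conj(F_r)` of a quantum walk with
spectral idempotents `F_r`, where `∘` is the entrywise (Hadamard) product and
`conj` is entrywise complex conjugation. -/
noncomputable def avgMix {ℓ m : ℕ} (F : Fin m → Matrix (Fin ℓ) (Fin ℓ) ℂ) :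
    Matrix (Fin ℓ) (Fin ℓ) ℂ :=
  ∑ r, Matrix.hadamard (F r) ((F r).map (starRingEnd ℂ))

lemma avgMix_apply {ℓ m : ℕ} (F : Fin m → Matrix (Fin ℓ) (Fin ℓ) ℂ) (i j : Fin ℓ) :
    avgMix F i j = ∑ r, F r i j * starRingEnd ℂ (F r i j) := by
  simp [avgMix, Matrix.sum_apply, Matrix.hadamard, Matrix.map_apply]

/-- The average mixing matrix has real nonnegative entries, is symmetric, and is doubly stochastic. -/
theorem avgMix_doubly_stochastic (ℓ m : ℕ) (hℓ : 0 < ℓ)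
    (U : Matrix (Fin ℓ) (Fin ℓ) ℂ)
    (hU : U ∈ Matrix.unitaryGroup (Fin ℓ) ℂ)
    (lam : Fin m → ℂ) (F : Fin m → Matrix (Fin ℓ) (Fin ℓ) ℂ)
    (hdist : Function.Injective lam)
    (hmod : ∀ r, ‖lam r‖ = 1)
    (hherm : ∀ r, (F r)ᴴ = F r)
    (hidem : ∀ r, F r * F r = F r)
    (horth : ∀ r s, r ≠ s → F r * F s = 0)
    (hsum : ∑ r, F r = 1)
    (hspec : U = ∑ r, lam r • F r)
    :
    (∀ i j, (avgMix F i j).im = 0 ∧ 0 ≤ (avgMix F i j).re) ∧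
      (avgMix F)ᵀ = avgMix F ∧
      (∀ i, ∑ j, avgMix F i j = 1) ∧
      (∀ j, ∑ i, avgMix F i j = 1) := by
  have hconj : ∀ r (i j : Fin ℓ), F r j i = starRingEnd ℂ (F r i j) := by
    intro r i j
    conv_lhs => rw [← hherm r]
    simp [Matrix.conjTranspose_apply]
  have hrow : ∀ i, ∑ j, avgMix F i j = 1 := by
    intro i
    simp only [avgMix_apply]
    rw [Finset.sum_comm]
    have : ∀ r : Fin m, ∑ j, F r i j * starRingEnd ℂ (F r i j) = F r i i := by
      intro r
      calc ∑ j, F r i j * starRingEnd ℂ (F r i j)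
          = ∑ j, F r i j * F r j i := by simp_rw [← hconj]
        _ = (F r * F r) i i := by rw [Matrix.mul_apply]
        _ = F r i i := by rw [hidem]
    simp_rw [this]
    have := congrArg (fun M : Matrix (Fin ℓ) (Fin ℓ) ℂ => M i i) hsum
    simpa [Matrix.sum_apply, Matrix.one_apply] using this
  have hsymm : (avgMix F)ᵀ = avgMix F := by
    ext i j
    simp only [Matrix.transpose_apply, avgMix_apply]
    refine Finset.sum_congr rfl fun r _ => ?_
    rw [hconj r j i]
    ring_nf
    simp [mul_comm]
  refine ⟨?_, hsymm, hrow, ?_⟩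
  · intro i j
    rw [avgMix_apply]
    constructor
    · rw [Complex.im_sum]
      refine Finset.sum_eq_zero fun r _ => ?_
      simp [Complex.mul_conj]
    · rw [Complex.re_sum]
      refine Finset.sum_nonneg fun r _ => ?_
      simpa [Complex.mul_conj] using Complex.normSq_nonneg (F r i j)
  · intro j
    have : ∀ i, avgMix F i j = avgMix F j i := fun i => by
      conv_lhs => rw [← hsymm]
      rfl
    simp_rw [this]
    exact hrow j
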